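/- Let X ⊆ ℂ² be compact and let f = p/q be a rational function on ℂ², where p and q are relatively prime polynomials and q is nonvanishing on X. Suppose Γ = f(X) satisfies R(Γ) = C(Γ). Let F : ℂ² → ℂ be an entire function whose zero set V = {F = 0} is disjoint from X. Then R(X) contains every ψ ∈ C(X) such that for each t ∈ Γ the restriction ψ|X_t belongs to R_V(X_t). -/

import Mathlib

open Complex Set

/-- Evaluation of a polynomial in two variables at a point of `ℂ × ℂ`. -/
noncomputable def evalP (P : MvPolynomial (Fin 2) ℂ) (x : ℂ × ℂ) : ℂ :=
  MvPolynomial.eval ![x.1, x.2] P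

/-- `ψ` belongs to `R(X)`: it is a uniform limit on `X` of rational functions `P/Q`
with `Q` nonvanishing on `X`. -/
def MemRatAlg (X : Set (ℂ × ℂ)) (ψ : ℂ × ℂ → ℂ) : Prop :=
  ∀ ε > 0, ∃ P Q : MvPolynomial (Fin 2) ℂ, (∀ x ∈ X, evalP Q x ≠ 0) ∧
    ∀ x ∈ X, ‖ψ x - evalP P x / evalP Q x‖ < ε

/-- `ψ` belongs to `R(Γ)` for a compact set `Γ ⊆ ℂ`: uniform limit on `Γ` of
one-variable rational functions with poles off `Γ`. -/
def MemRatAlg1 (Γ : Set ℂ) (ψ : ℂ → ℂ) : Prop :=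
  ∀ ε > 0, ∃ P Q : Polynomial ℂ, (∀ t ∈ Γ, Polynomial.eval t Q ≠ 0) ∧
    ∀ t ∈ Γ, ‖ψ t - Polynomial.eval t P / Polynomial.eval t Q‖ < ε

/-- `ψ` belongs to `R_V(Y)`, where `V = {F = 0}`: uniform limit on `Y` of functions
`G/F^m` with `G` entire and `m ∈ ℕ`. -/
def MemRVAlg (F : ℂ × ℂ → ℂ) (Y : Set (ℂ × ℂ)) (ψ : ℂ × ℂ → ℂ) : Prop :=
  ∀ ε > 0, ∃ (G : ℂ × ℂ → ℂ) (m : ℕ), Differentiable ℂ G ∧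
    ∀ x ∈ Y, ‖ψ x - G x / (F x) ^ m‖ < ε

section Aux
open Real

/-- `φ` is (on `X`) a rational function with nonvanishing denominator. -/
def IsRat (X : Set (ℂ × ℂ)) (φ : ℂ × ℂ → ℂ) : Prop :=
  ∃ P Q : MvPolynomial (Fin 2) ℂ, (∀ x ∈ X, evalP Q x ≠ 0) ∧
    ∀ x ∈ X, φ x = evalP P x / evalP Q x

namespace IsRat

variable {X : Set (ℂ × ℂ)} {φ ψ : ℂ × ℂ → ℂ}

lemma evalP_mul (P Q : MvPolynomial (Fin 2) ℂ) (x : ℂ × ℂ) :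
    evalP (P * Q) x = evalP P x * evalP Q x := by simp [evalP]

lemma evalP_one (x : ℂ × ℂ) : evalP 1 x = 1 := by simp [evalP]

lemma const (c : ℂ) : IsRat X (fun _ => c) :=
  ⟨MvPolynomial.C c, 1, fun x _ => by simp [evalP], fun x _ => by simp [evalP]⟩

lemma fst : IsRat X (fun x => x.1) :=
  ⟨MvPolynomial.X 0, 1, fun x _ => by simp [evalP], fun x _ => by simp [evalP]⟩

lemma snd : IsRat X (fun x => x.2) :=
  ⟨MvPolynomial.X 1, 1, fun x _ => by simp [evalP], fun x _ => by simp [evalP]⟩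

lemma add (hφ : IsRat X φ) (hψ : IsRat X ψ) : IsRat X (fun x => φ x + ψ x) := by
  obtain ⟨P1, Q1, h1, e1⟩ := hφ
  obtain ⟨P2, Q2, h2, e2⟩ := hψ
  refine ⟨P1 * Q2 + Q1 * P2, Q1 * Q2, fun x hx => by
    simp [evalP_mul, h1 x hx, h2 x hx], fun x hx => ?_⟩
  have hq1 := h1 x hx; have hq2 := h2 x hx
  show φ x + ψ x = _
  rw [e1 x hx, e2 x hx, div_add_div _ _ hq1 hq2]
  simp [evalP]

lemma mul (hφ : IsRat X φ) (hψ : IsRat X ψ) : IsRat X (fun x => φ x * ψ x) := by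
  obtain ⟨P1, Q1, h1, e1⟩ := hφ
  obtain ⟨P2, Q2, h2, e2⟩ := hψ
  refine ⟨P1 * P2, Q1 * Q2, fun x hx => by
    simp [evalP_mul, h1 x hx, h2 x hx], fun x hx => ?_⟩
  show φ x * ψ x = _
  rw [e1 x hx, e2 x hx, evalP_mul, evalP_mul, div_mul_div_comm]

lemma sub (hφ : IsRat X φ) (hψ : IsRat X ψ) : IsRat X (fun x => φ x - ψ x) := by
  have := hφ.add ((const (-1)).mul hψ)
  simpa [sub_eq_add_neg, neg_mul, mul_comm] using this

lemma inv (hφ : IsRat X φ) (h0 : ∀ x ∈ X, φ x ≠ 0) : IsRat X (fun x => (φ x)⁻¹) := by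
  obtain ⟨P, Q, hQ, e⟩ := hφ
  refine ⟨Q, P, fun x hx => ?_, fun x hx => ?_⟩
  · intro hP
    exact h0 x hx (by rw [e x hx, hP, zero_div])
  · show (φ x)⁻¹ = _
    rw [e x hx, inv_div]

lemma finsetSum {ι : Type*} (s : Finset ι) (φ : ι → ℂ × ℂ → ℂ)
    (h : ∀ i ∈ s, IsRat X (φ i)) : IsRat X (fun x => ∑ i ∈ s, φ i x) := by
  classical
  induction s using Finset.induction_on with
  | empty => simpa using const 0
  | insert a s hnot ih =>
    simp only [Finset.sum_insert hnot]
    exact (h a (Finset.mem_insert_self a s)).add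
      (ih fun i hi => h i (Finset.mem_insert_of_mem hi))

end IsRat

lemma continuous_evalP (P : MvPolynomial (Fin 2) ℂ) : Continuous (evalP P) := by
  have h1 : Continuous fun x : ℂ × ℂ => (![x.1, x.2] : Fin 2 → ℂ) := by
    refine continuous_pi fun i => ?_
    fin_cases i
    · simpa using continuous_fst
    · simpa using continuous_snd
  exact (MvPolynomial.continuous_eval P).comp h1

/-- `q^d · P(p/q)` as a polynomial. -/
noncomputable def compPQ (p q : MvPolynomial (Fin 2) ℂ) (d : ℕ) (P : Polynomial ℂ) :
    MvPolynomial (Fin 2) ℂ :=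
  ∑ j ∈ Finset.range (d + 1), MvPolynomial.C (P.coeff j) * p ^ j * q ^ (d - j)

lemma evalP_compPQ {p q : MvPolynomial (Fin 2) ℂ} {d : ℕ} {P : Polynomial ℂ}
    (hd : P.natDegree < d + 1) {x : ℂ × ℂ} (hq : evalP q x ≠ 0) :
    evalP (compPQ p q d P) x
      = evalP q x ^ d * Polynomial.eval (evalP p x / evalP q x) P := by
  rw [Polynomial.eval_eq_sum_range' hd]
  rw [compPQ]
  simp only [evalP, map_sum, map_mul, map_pow, MvPolynomial.eval_C, Finset.mul_sum]
  refine Finset.sum_congr rfl fun j hj => ?_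
  have hjd : j ≤ d := Nat.lt_succ_iff.mp (Finset.mem_range.mp hj)
  rw [div_pow]
  set A := (MvPolynomial.eval ![x.1, x.2]) p ^ j with hA
  set B := (MvPolynomial.eval ![x.1, x.2]) q with hB
  have h2 : B ^ j ≠ 0 := pow_ne_zero _ hq
  have key : B ^ d * (A / B ^ j) = A * B ^ (d - j) := by
    field_simp
    rw [mul_assoc, ← pow_add, Nat.add_sub_cancel' hjd]
    ring
  linear_combination (-(P.coeff j)) * key

/-- Composition of a one-variable rational function with `f = p/q`. -/
lemma isRat_comp_rat1 {X : Set (ℂ × ℂ)} {p q : MvPolynomial (Fin 2) ℂ}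
    (hq : ∀ x ∈ X, evalP q x ≠ 0) {f : ℂ × ℂ → ℂ}
    (hf : ∀ x, f x = evalP p x / evalP q x)
    (P Q : Polynomial ℂ) (hQ : ∀ x ∈ X, Polynomial.eval (f x) Q ≠ 0) :
    IsRat X (fun x => Polynomial.eval (f x) P / Polynomial.eval (f x) Q) := by
  set d := max P.natDegree Q.natDegree with hdd
  refine ⟨compPQ p q d P, compPQ p q d Q, fun x hx => ?_, fun x hx => ?_⟩
  · rw [evalP_compPQ (Nat.lt_succ_of_le (le_max_right _ _)) (hq x hx)]
    rw [← hf x]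
    exact mul_ne_zero (pow_ne_zero _ (hq x hx)) (hQ x hx)
  · rw [evalP_compPQ (Nat.lt_succ_of_le (le_max_left _ _)) (hq x hx),
      evalP_compPQ (Nat.lt_succ_of_le (le_max_right _ _)) (hq x hx), ← hf x,
      mul_div_mul_left _ _ (pow_ne_zero _ (hq x hx))]

/-- Riemann sum approximation for continuous functions on `[0, 2π]`. -/
lemma riemann_sum_approx (n : ℕ) (hn : 0 < n) (h : ℝ → ℂ)
    (hcont : ContinuousOn h (Icc 0 (2 * π))) {δ : ℝ}
    (hδ : ∀ s t : ℝ, s ∈ Icc 0 (2 * π) → t ∈ Icc 0 (2 * π) → |s - t| ≤ 2 * π / n →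
      ‖h s - h t‖ ≤ δ) :
    ‖(∫ θ in (0:ℝ)..(2 * π), h θ) -
      ∑ j ∈ Finset.range n, (2 * π / n) * h (2 * π * j / n)‖ ≤ 2 * π * δ := by
  have hπ : (0:ℝ) < 2 * π := Real.two_pi_pos
  have hn' : (n:ℝ) ≠ 0 := Nat.cast_ne_zero.mpr hn.ne'
  set Δ : ℝ := 2 * π / n with hΔ
  have hΔpos : 0 < Δ := div_pos hπ (by exact_mod_cast hn)
  have hnΔ : (n:ℝ) * Δ = 2 * π := by rw [hΔ]; field_simp
  set a : ℕ → ℝ := fun j => j * Δ with ha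
  have hmono : ∀ j : ℕ, a j ≤ a (j+1) := by
    intro j
    show (j:ℝ) * Δ ≤ (j+1 : ℕ) * Δ
    push_cast
    nlinarith
  have haj : ∀ j : ℕ, j ≤ n → a j ∈ Icc 0 (2 * π) := by
    intro j hj
    constructor
    · show (0:ℝ) ≤ (j:ℝ) * Δ
      positivity
    · show (j:ℝ) * Δ ≤ 2 * π
      calc (j:ℝ) * Δ ≤ n * Δ := by
            apply mul_le_mul_of_nonneg_right (by exact_mod_cast hj) hΔpos.le
        _ = 2 * π := hnΔ
  have han : a n = 2 * π := hnΔ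
  have ha0 : a 0 = 0 := by show (0:ℕ) * Δ = 0; norm_num
  have hsub : ∀ j : ℕ, j < n → Set.uIcc (a j) (a (j+1)) ⊆ Icc 0 (2 * π) := by
    intro j hj
    rw [Set.uIcc_of_le (hmono j)]
    intro t ht
    exact ⟨le_trans (haj j hj.le).1 ht.1, le_trans ht.2 (haj (j+1) hj).2⟩
  have hint : ∀ j : ℕ, j < n → IntervalIntegrable h MeasureTheory.volume (a j) (a (j+1)) :=
    fun j hj => (hcont.mono (hsub j hj)).intervalIntegrable
  have hsplit : (∫ θ in (0:ℝ)..(2 * π), h θ)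
      = ∑ j ∈ Finset.range n, ∫ θ in (a j)..(a (j+1)), h θ := by
    rw [← ha0, ← han]
    exact (intervalIntegral.sum_integral_adjacent_intervals hint).symm
  rw [hsplit, ← Finset.sum_sub_distrib]
  refine le_trans (norm_sum_le _ _) ?_
  have hc : ((2:ℂ) * (π:ℂ) / (n:ℂ)) = ((Δ:ℝ):ℂ) := by rw [hΔ]; push_cast; ring
  simp only [hc]
  have hterm : ∀ j ∈ Finset.range n,
      ‖(∫ θ in (a j)..(a (j+1)), h θ) - Δ * h (2 * π * j / n)‖ ≤ δ * Δ := by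
    intro j hj
    have hjn := Finset.mem_range.mp hj
    have haa : a (j+1) - a j = Δ := by
      show ((j+1 : ℕ):ℝ) * Δ - (j:ℝ) * Δ = Δ
      push_cast; ring
    have hpt : (2 * π * j / n : ℝ) = a j := by
      show _ = (j:ℝ) * Δ
      rw [hΔ]; field_simp
    have hconst : Δ * h (2 * π * j / n) = ∫ _ in (a j)..(a (j+1)), h (a j) := by
      rw [intervalIntegral.integral_const, haa, hpt, Complex.real_smul]
    rw [hconst, ← intervalIntegral.integral_sub (hint j hjn) intervalIntegrable_const]
    have hb : ∀ t ∈ Set.uIoc (a j) (a (j+1)), ‖h t - h (a j)‖ ≤ δ := by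
      intro t ht
      rw [Set.uIoc_of_le (hmono j)] at ht
      have ht1 : t ∈ Icc 0 (2 * π) := by
        apply hsub j hjn
        rw [Set.uIcc_of_le (hmono j)]
        exact ⟨ht.1.le, ht.2⟩
      have ht2 : |t - a j| ≤ Δ := by
        rw [_root_.abs_of_nonneg (by linarith [ht.1.le])]
        have := ht.2
        linarith [haa]
      exact hδ t (a j) ht1 (haj j hjn.le) ht2
    calc ‖∫ θ in (a j)..(a (j+1)), (h θ - h (a j))‖ ≤ δ * |a (j+1) - a j| :=
          intervalIntegral.norm_integral_le_of_norm_le_const hb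
      _ = δ * Δ := by rw [haa, abs_of_pos hΔpos]
  calc (∑ j ∈ Finset.range n, ‖(∫ θ in (a j)..(a (j+1)), h θ) - Δ * h (2 * π * j / n)‖)
      ≤ ∑ j ∈ Finset.range n, δ * Δ := Finset.sum_le_sum hterm
    _ = n * (δ * Δ) := by rw [Finset.sum_const, Finset.card_range, nsmul_eq_mul]
    _ = 2 * π * δ := by rw [← mul_assoc, mul_comm (n:ℝ) δ, mul_assoc, hnΔ]; ring

lemma cauchy_interval {g : ℂ → ℂ} (hg : Differentiable ℂ g) {R : ℝ} (hR : 0 < R) {z : ℂ}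
    (hz : ‖z‖ < R) :
    g z = ∫ θ in (0:ℝ)..(2*π),
      (2 * π * I : ℂ)⁻¹ * (deriv (circleMap 0 R) θ *
        ((circleMap 0 R θ - z)⁻¹ * g (circleMap 0 R θ))) := by
  have h1 : DiffContOnCl ℂ g (Metric.ball 0 R) :=
    hg.diffContOnCl
  have h2 := h1.two_pi_i_inv_smul_circleIntegral_sub_inv_smul
    (by simpa [Metric.mem_ball, Complex.dist_eq] using hz)
  rw [← h2, circleIntegral, ← intervalIntegral.integral_smul]
  simp only [smul_eq_mul]


/-- The double Cauchy kernel. -/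
noncomputable def RKern (G : ℂ × ℂ → ℂ) (R : ℝ) (θ t : ℝ) (x : ℂ × ℂ) : ℂ :=
  ((2 * ↑π * I : ℂ)⁻¹ * (circleMap 0 R θ * I) *
      ((2 * ↑π * I : ℂ)⁻¹ * (circleMap 0 R t * I) * G (circleMap 0 R θ, circleMap 0 R t))) *
    ((circleMap 0 R θ - x.1)⁻¹ * (circleMap 0 R t - x.2)⁻¹)

set_option maxHeartbeats 1000000 in
lemma entire_approx {X : Set (ℂ × ℂ)} (hX : IsCompact X) {G : ℂ × ℂ → ℂ}
    (hG : Differentiable ℂ G) :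
    ∀ ε > 0, ∃ φ, IsRat X φ ∧ ∀ x ∈ X, ‖G x - φ x‖ ≤ ε := by
  intro ε hε
  obtain ⟨C, hC⟩ := isBounded_iff_forall_norm_le.mp hX.isBounded
  set r : ℝ := |C| with hr
  set R : ℝ := r + 1 with hRdef
  have hrnn : 0 ≤ r := abs_nonneg C
  have hR : 0 < R := by positivity
  have hrR : r < R := by simp [hRdef]
  have hx1r : ∀ x ∈ X, ‖x.1‖ ≤ r := fun x hx =>
    le_trans (le_trans (norm_fst_le x) (hC x hx)) (le_abs_self C)
  have hx2r : ∀ x ∈ X, ‖x.2‖ ≤ r := fun x hx =>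
    le_trans (le_trans (norm_snd_le x) (hC x hx)) (le_abs_self C)
  set e : ℝ → ℂ := circleMap 0 R with he
  have habs : ∀ θ : ℝ, ‖e θ‖ = R := by
    intro θ; rw [he, norm_circleMap_zero, _root_.abs_of_pos hR]
  have hne1 : ∀ (θ : ℝ), ∀ x ∈ X, e θ - x.1 ≠ 0 := by
    intro θ x hx h0
    have h1 := sub_eq_zero.mp h0
    have := hx1r x hx
    rw [← h1, habs] at this
    linarith
  have hne2 : ∀ (θ : ℝ), ∀ x ∈ X, e θ - x.2 ≠ 0 := by
    intro θ x hx h0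
    have h1 := sub_eq_zero.mp h0
    have := hx2r x hx
    rw [← h1, habs] at this
    linarith
  -- rationality of the kernel
  have hrat : ∀ θ t : ℝ, IsRat X (fun x => RKern G R θ t x) := by
    intro θ t
    exact (IsRat.const _).mul
      ((((IsRat.const (e θ)).sub IsRat.fst).inv (hne1 θ)).mul
        (((IsRat.const (e t)).sub IsRat.snd).inv (hne2 t)))
  -- joint continuity
  set S : Set ((ℝ × ℝ) × ℂ × ℂ) := (Icc 0 (2*π) ×ˢ Icc 0 (2*π)) ×ˢ X with hS
  have hScomp : IsCompact S := (isCompact_Icc.prod isCompact_Icc).prod hX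
  have hcm : Continuous e := continuous_circleMap 0 R
  have hΨ : ContinuousOn (fun y : (ℝ × ℝ) × ℂ × ℂ => RKern G R y.1.1 y.1.2 y.2) S := by
    apply ContinuousOn.mul
    · apply Continuous.continuousOn
      apply Continuous.mul
      · exact continuous_const.mul ((hcm.comp (continuous_fst.comp continuous_fst)).mul
          continuous_const)
      · exact (continuous_const.mul ((hcm.comp (continuous_snd.comp continuous_fst)).mul
          continuous_const)).mul (hG.continuous.comp
          (((hcm.comp (continuous_fst.comp continuous_fst))).prodMk
            (hcm.comp (continuous_snd.comp continuous_fst))))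
    · apply ContinuousOn.mul
      · refine ContinuousOn.inv₀ (Continuous.continuousOn ?_) ?_
        · exact (hcm.comp (continuous_fst.comp continuous_fst)).sub
            (continuous_fst.comp continuous_snd)
        · exact fun y hy => hne1 y.1.1 y.2 hy.2
      · refine ContinuousOn.inv₀ (Continuous.continuousOn ?_) ?_
        · exact (hcm.comp (continuous_snd.comp continuous_fst)).sub
            (continuous_snd.comp continuous_snd)
        · exact fun y hy => hne2 y.1.2 y.2 hy.2
  -- uniform continuity
  set δ : ℝ := ε / (8 * π ^ 2 + 1) with hδdef
  have hδpos : 0 < δ := by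
    apply div_pos hε; positivity
  obtain ⟨δ₀, hδ₀pos, hδ₀⟩ :=
    Metric.uniformContinuousOn_iff.mp (hScomp.uniformContinuousOn_of_continuous hΨ) δ hδpos
  obtain ⟨n, hn⟩ := exists_nat_gt (2 * π / δ₀)
  have h2πδ₀ : 0 < 2 * π / δ₀ := by positivity
  have hnpos : 0 < n := by exact_mod_cast Nat.cast_pos.mp (lt_trans h2πδ₀ hn)
  have hn' : (0:ℝ) < n := by exact_mod_cast hnpos
  have hstep : 2 * π / n < δ₀ := by
    rw [div_lt_iff₀ hn']
    rw [div_lt_iff₀ hδ₀pos] at hn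
    linarith [hn]
  -- increments
  have hinc : ∀ θ θ' t t' : ℝ, θ ∈ Icc 0 (2*π) → θ' ∈ Icc 0 (2*π) → t ∈ Icc 0 (2*π) →
      t' ∈ Icc 0 (2*π) → |θ - θ'| ≤ 2*π/n → |t - t'| ≤ 2*π/n → ∀ x ∈ X,
      ‖RKern G R θ t x - RKern G R θ' t' x‖ ≤ δ := by
    intro θ θ' t t' hθ hθ' ht ht' hd1 hd2 x hx
    have hmem : ((θ, t), x) ∈ S := ⟨⟨hθ, ht⟩, hx⟩
    have hmem' : ((θ', t'), x) ∈ S := ⟨⟨hθ', ht'⟩, hx⟩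
    have hdist : dist (((θ, t), x) : (ℝ × ℝ) × ℂ × ℂ) ((θ', t'), x) < δ₀ := by
      rw [Prod.dist_eq, Prod.dist_eq]
      simp only [dist_self]
      rw [Real.dist_eq, Real.dist_eq]
      apply max_lt (max_lt (lt_of_le_of_lt hd1 hstep) (lt_of_le_of_lt hd2 hstep)) hδ₀pos
    have := hδ₀ _ hmem _ hmem' hdist
    rw [dist_eq_norm] at this
    exact this.le
  -- membership of the sample points
  have hpt : ∀ j : ℕ, j < n → (2*π*j/n : ℝ) ∈ Icc 0 (2*π) := by
    intro j hj
    constructor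
    · positivity
    · rw [div_le_iff₀ hn']
      have : (j:ℝ) ≤ n := by exact_mod_cast hj.le
      nlinarith [Real.pi_pos]
  -- the approximant
  set hout : ℝ → (ℂ × ℂ) → ℂ :=
    fun t x => ∑ j ∈ Finset.range n, (2 * ↑π / ↑n) * RKern G R (2*π*j/n) t x with hhout
  refine ⟨fun x => ∑ k ∈ Finset.range n, (2 * ↑π / ↑n) * hout (2*π*k/n) x, ?_, ?_⟩
  · apply IsRat.finsetSum
    intro k _
    exact (IsRat.const _).mul (IsRat.finsetSum _ _ (fun j _ =>
      (IsRat.const _).mul (hrat _ _)))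
  intro x hx
  have hx1R : ‖x.1‖ < R := lt_of_le_of_lt (hx1r x hx) hrR
  have hx2R : ‖x.2‖ < R := lt_of_le_of_lt (hx2r x hx) hrR
  -- inner Cauchy formula
  have hGinner : ∀ t : ℝ, G (x.1, e t) = ∫ θ in (0:ℝ)..(2*π),
      (2 * ↑π * I : ℂ)⁻¹ * (deriv (circleMap 0 R) θ * ((e θ - x.1)⁻¹ * G (e θ, e t))) := by
    intro t
    exact cauchy_interval (g := fun z => G (z, e t))
      (hG.comp (differentiable_id.prodMk (differentiable_const _))) hR hx1R
  set K : ℝ → ℂ := fun t => ∫ θ in (0:ℝ)..(2*π), RKern G R θ t x with hK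
  have hKdef : ∀ t : ℝ, K t
      = (2 * ↑π * I : ℂ)⁻¹ * (e t * I) * (e t - x.2)⁻¹ * G (x.1, e t) := by
    intro t
    have h1 : ∀ θ : ℝ, RKern G R θ t x
        = ((2 * ↑π * I : ℂ)⁻¹ * (e t * I) * (e t - x.2)⁻¹) *
          ((2 * ↑π * I : ℂ)⁻¹ * (deriv (circleMap 0 R) θ * ((e θ - x.1)⁻¹ * G (e θ, e t)))) := by
      intro θ
      simp only [RKern, deriv_circleMap, he]
      ring
    rw [hK]
    simp only []
    rw [intervalIntegral.integral_congr (g :=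
      fun θ => ((2 * ↑π * I : ℂ)⁻¹ * (e t * I) * (e t - x.2)⁻¹) *
        ((2 * ↑π * I : ℂ)⁻¹ * (deriv (circleMap 0 R) θ * ((e θ - x.1)⁻¹ * G (e θ, e t)))))
      (fun θ _ => h1 θ)]
    rw [intervalIntegral.integral_const_mul, ← hGinner t]
  -- outer Cauchy formula
  have hGout : G x = ∫ t in (0:ℝ)..(2*π), K t := by
    have h0 : G x = ∫ t in (0:ℝ)..(2*π),
        (2 * ↑π * I : ℂ)⁻¹ * (deriv (circleMap 0 R) t * ((e t - x.2)⁻¹ * G (x.1, e t))) := by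
      exact cauchy_interval (g := fun w => G (x.1, w))
        (hG.comp ((differentiable_const _).prodMk differentiable_id)) hR hx2R
    rw [h0]
    apply intervalIntegral.integral_congr
    intro t _
    rw [hKdef t]
    simp only [deriv_circleMap, he]
    ring
  -- continuity of K
  have hKcont : ContinuousOn K (Icc 0 (2*π)) := by
    have hc : Continuous fun t : ℝ =>
        (2 * ↑π * I : ℂ)⁻¹ * (e t * I) * (e t - x.2)⁻¹ * G (x.1, e t) := by
      apply Continuous.mul
      · apply Continuous.mul (continuous_const.mul (hcm.mul continuous_const))
        exact Continuous.inv₀ (hcm.sub continuous_const) (fun t => hne2 t x hx)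
      · exact hG.continuous.comp (continuous_const.prodMk hcm)
    exact (hc.continuousOn).congr (fun t _ => hKdef t)
  -- continuity of Φ in each slot
  have hΦcont1 : ∀ t : ℝ, t ∈ Icc 0 (2*π) → ContinuousOn (fun θ => RKern G R θ t x)
      (Icc 0 (2*π)) := by
    intro t ht
    have hm : Continuous fun θ : ℝ => (((θ, t), x) : (ℝ × ℝ) × ℂ × ℂ) :=
      (continuous_id.prodMk continuous_const).prodMk continuous_const
    have := hΨ.comp hm.continuousOn (fun θ hθ => ⟨⟨hθ, ht⟩, hx⟩)
    simpa [Function.comp_def] using this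
  have hΦcont2 : ∀ θ : ℝ, θ ∈ Icc 0 (2*π) → ContinuousOn (fun t => RKern G R θ t x)
      (Icc 0 (2*π)) := by
    intro θ hθ
    have hm : Continuous fun t : ℝ => (((θ, t), x) : (ℝ × ℝ) × ℂ × ℂ) :=
      (continuous_const.prodMk continuous_id).prodMk continuous_const
    have := hΨ.comp hm.continuousOn (fun t ht => ⟨⟨hθ, ht⟩, hx⟩)
    simpa [Function.comp_def] using this
  have houtcont : ContinuousOn (fun t => hout t x) (Icc 0 (2*π)) := by
    apply continuousOn_finset_sum
    intro j hj
    exact continuousOn_const.mul (hΦcont2 _ (hpt j (Finset.mem_range.mp hj)))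
  -- step (i): inner Riemann sums
  have hRS1 : ∀ t ∈ Icc 0 (2*π), ‖K t - hout t x‖ ≤ 2*π*δ := by
    intro t ht
    exact riemann_sum_approx n hnpos (fun θ => RKern G R θ t x)
      (hΦcont1 t ht) (fun s s' hs hs' hss' =>
        hinc s s' t t hs hs' ht ht hss' (by simp [hδpos.le]; positivity) x hx)
  -- step (iv)
  have hint1 : IntervalIntegrable K MeasureTheory.volume 0 (2*π) := by
    apply ContinuousOn.intervalIntegrable
    rwa [Set.uIcc_of_le Real.two_pi_pos.le]
  have hint2 : IntervalIntegrable (fun t => hout t x) MeasureTheory.volume 0 (2*π) := by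
    apply ContinuousOn.intervalIntegrable
    rwa [Set.uIcc_of_le Real.two_pi_pos.le]
  have h4 : ‖(∫ t in (0:ℝ)..(2*π), K t) - ∫ t in (0:ℝ)..(2*π), hout t x‖ ≤ 2*π*(2*π*δ) := by
    rw [← intervalIntegral.integral_sub hint1 hint2]
    have := intervalIntegral.norm_integral_le_of_norm_le_const
      (C := 2*π*δ) (f := fun t => K t - hout t x) (a := 0) (b := 2*π) ?_
    · calc ‖∫ t in (0:ℝ)..(2*π), (K t - hout t x)‖ ≤ 2*π*δ * |2*π - 0| := this
        _ = 2*π*(2*π*δ) := by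
            rw [sub_zero, _root_.abs_of_pos Real.two_pi_pos]; ring
    · intro t ht
      rw [Set.uIoc_of_le Real.two_pi_pos.le] at ht
      exact hRS1 t ⟨ht.1.le, ht.2⟩
  -- step (v): outer Riemann sum
  have h5 : ‖(∫ t in (0:ℝ)..(2*π), hout t x) -
      ∑ k ∈ Finset.range n, (2 * ↑π / ↑n) * hout (2*π*k/n) x‖ ≤ 2*π*(2*π*δ) := by
    apply riemann_sum_approx n hnpos _ houtcont
    intro s t hs ht hst
    rw [hhout]
    simp only []
    rw [← Finset.sum_sub_distrib]
    have : ∀ j ∈ Finset.range n,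
        ‖(2 * (π:ℂ) / (n:ℂ)) * RKern G R (2*π*j/n) s x -
          (2 * (π:ℂ) / (n:ℂ)) * RKern G R (2*π*j/n) t x‖ ≤ (2*π/n) * δ := by
      intro j hj
      rw [← mul_sub, norm_mul]
      have hcn : ‖(2 * (π:ℂ) / (n:ℂ))‖ = 2*π/n := by
        rw [norm_div, norm_mul]
        simp [Complex.norm_real, _root_.abs_of_pos Real.pi_pos, Real.pi_pos.le]
      rw [hcn]
      apply mul_le_mul_of_nonneg_left _ (by positivity)
      have hmem := hpt j (Finset.mem_range.mp hj)
      exact hinc _ _ s t hmem hmem hs ht (by simp; positivity) hst x hx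
    refine le_trans (le_trans (norm_sum_le _ _) (Finset.sum_le_sum this)) ?_
    rw [Finset.sum_const, Finset.card_range, nsmul_eq_mul]
    field_simp; exact le_rfl
  -- put everything together
  have hsplit : G x - ∑ k ∈ Finset.range n, (2 * ↑π / ↑n) * hout (2*π*k/n) x
      = ((∫ t in (0:ℝ)..(2*π), K t) - ∫ t in (0:ℝ)..(2*π), hout t x) +
        ((∫ t in (0:ℝ)..(2*π), hout t x) -
          ∑ k ∈ Finset.range n, (2 * ↑π / ↑n) * hout (2*π*k/n) x) := by
    rw [hGout]; ring
  rw [hsplit]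
  calc ‖_ + _‖ ≤ 2*π*(2*π*δ) + 2*π*(2*π*δ) := le_trans (norm_add_le _ _) (add_le_add h4 h5)
    _ = 8*π^2*δ := by ring
    _ ≤ ε := by
        rw [hδdef, ← mul_div_assoc]
        rw [div_le_iff₀ (by positivity : (0:ℝ) < 8*π^2+1)]
        nlinarith [hε.le, Real.pi_pos]


/-- `φ` is uniformly approximable on `X` by rational functions. -/
def ApproxRat (X : Set (ℂ × ℂ)) (φ : ℂ × ℂ → ℂ) : Prop :=
  ∀ ε > 0, ∃ ρ, IsRat X ρ ∧ ∀ x ∈ X, ‖φ x - ρ x‖ ≤ ε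

namespace ApproxRat

variable {X : Set (ℂ × ℂ)} {φ ψ : ℂ × ℂ → ℂ}

lemma ofIsRat (h : IsRat X φ) : ApproxRat X φ :=
  fun ε hε => ⟨φ, h, fun x _ => by simp [hε.le]⟩

lemma ofApprox (h : ∀ ε > 0, ∃ φ', ApproxRat X φ' ∧ ∀ x ∈ X, ‖ψ x - φ' x‖ ≤ ε) :
    ApproxRat X ψ := by
  intro ε hε
  obtain ⟨φ', hφ', hclose⟩ := h (ε/2) (by positivity)
  obtain ⟨ρ, hρ, hρclose⟩ := hφ' (ε/2) (by positivity)
  refine ⟨ρ, hρ, fun x hx => ?_⟩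
  calc ‖ψ x - ρ x‖ = ‖(ψ x - φ' x) + (φ' x - ρ x)‖ := by ring_nf
    _ ≤ ‖ψ x - φ' x‖ + ‖φ' x - ρ x‖ := norm_add_le _ _
    _ ≤ ε/2 + ε/2 := add_le_add (hclose x hx) (hρclose x hx)
    _ = ε := by ring

lemma add (hφ : ApproxRat X φ) (hψ : ApproxRat X ψ) : ApproxRat X (fun x => φ x + ψ x) := by
  intro ε hε
  obtain ⟨ρ1, h1, c1⟩ := hφ (ε/2) (by positivity)
  obtain ⟨ρ2, h2, c2⟩ := hψ (ε/2) (by positivity)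
  refine ⟨fun x => ρ1 x + ρ2 x, h1.add h2, fun x hx => ?_⟩
  calc ‖(φ x + ψ x) - (ρ1 x + ρ2 x)‖ = ‖(φ x - ρ1 x) + (ψ x - ρ2 x)‖ := by ring_nf
    _ ≤ ‖φ x - ρ1 x‖ + ‖ψ x - ρ2 x‖ := norm_add_le _ _
    _ ≤ ε/2 + ε/2 := add_le_add (c1 x hx) (c2 x hx)
    _ = ε := by ring

lemma mul (hφ : ApproxRat X φ) (hψ : ApproxRat X ψ) {M₁ M₂ : ℝ} (hM₁0 : 0 ≤ M₁)
    (hM₂0 : 0 ≤ M₂) (hb1 : ∀ x ∈ X, ‖φ x‖ ≤ M₁) (hb2 : ∀ x ∈ X, ‖ψ x‖ ≤ M₂) :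
    ApproxRat X (fun x => φ x * ψ x) := by
  intro ε hε
  set δ : ℝ := min 1 (ε / (M₁ + M₂ + 1)) with hδdef
  have hδpos : 0 < δ := lt_min one_pos (by positivity)
  obtain ⟨ρ1, h1, c1⟩ := hφ δ hδpos
  obtain ⟨ρ2, h2, c2⟩ := hψ δ hδpos
  refine ⟨fun x => ρ1 x * ρ2 x, h1.mul h2, fun x hx => ?_⟩
  have hδ1 : δ ≤ 1 := min_le_left _ _
  have hδ2 : δ ≤ ε / (M₁ + M₂ + 1) := min_le_right _ _
  have hρ2b : ‖ρ2 x‖ ≤ M₂ + δ := by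
    calc ‖ρ2 x‖ = ‖ψ x - (ψ x - ρ2 x)‖ := by ring_nf
      _ ≤ ‖ψ x‖ + ‖ψ x - ρ2 x‖ := norm_sub_le _ _
      _ ≤ M₂ + δ := add_le_add (hb2 x hx) (c2 x hx)
  calc ‖φ x * ψ x - ρ1 x * ρ2 x‖
      = ‖φ x * (ψ x - ρ2 x) + (φ x - ρ1 x) * ρ2 x‖ := by ring_nf
    _ ≤ ‖φ x * (ψ x - ρ2 x)‖ + ‖(φ x - ρ1 x) * ρ2 x‖ := norm_add_le _ _
    _ = ‖φ x‖ * ‖ψ x - ρ2 x‖ + ‖φ x - ρ1 x‖ * ‖ρ2 x‖ := by rw [norm_mul, norm_mul]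
    _ ≤ M₁ * δ + δ * (M₂ + δ) := by
        apply add_le_add
        · exact mul_le_mul (hb1 x hx) (c2 x hx) (norm_nonneg _) hM₁0
        · exact mul_le_mul (c1 x hx) hρ2b (norm_nonneg _) hδpos.le
    _ ≤ δ * (M₁ + M₂ + 1) := by nlinarith
    _ ≤ (ε / (M₁ + M₂ + 1)) * (M₁ + M₂ + 1) := by
        apply mul_le_mul_of_nonneg_right hδ2 (by positivity)
    _ = ε := by field_simp

lemma inv (hφ : ApproxRat X φ) {c : ℝ} (hc : 0 < c) (hlb : ∀ x ∈ X, c ≤ ‖φ x‖) :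
    ApproxRat X (fun x => (φ x)⁻¹) := by
  intro ε hε
  set δ : ℝ := min (c/2) (ε * c^2 / 2) with hδdef
  have hδpos : 0 < δ := lt_min (by positivity) (by positivity)
  obtain ⟨ρ, hρ, hclose⟩ := hφ δ hδpos
  have hρlb : ∀ x ∈ X, c/2 ≤ ‖ρ x‖ := by
    intro x hx
    have h1 : ‖φ x‖ - ‖φ x - ρ x‖ ≤ ‖ρ x‖ := by
      have := norm_sub_norm_le (φ x) (ρ x)
      linarith [this]
    have h2 := hclose x hx
    have h3 := hlb x hx
    have h4 : δ ≤ c/2 := min_le_left _ _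
    linarith
  have hρne : ∀ x ∈ X, ρ x ≠ 0 := by
    intro x hx h0
    have := hρlb x hx
    rw [h0, norm_zero] at this
    linarith
  have hφne : ∀ x ∈ X, φ x ≠ 0 := by
    intro x hx h0
    have := hlb x hx
    rw [h0, norm_zero] at this
    linarith
  refine ⟨fun x => (ρ x)⁻¹, hρ.inv hρne, fun x hx => ?_⟩
  have hid : (φ x)⁻¹ - (ρ x)⁻¹ = (ρ x - φ x) * (φ x)⁻¹ * (ρ x)⁻¹ := by
    field_simp [hφne x hx, hρne x hx]
  rw [hid, norm_mul, norm_mul, norm_inv, norm_inv]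
  have h1 : ‖ρ x - φ x‖ ≤ δ := by
    rw [norm_sub_rev]
    exact hclose x hx
  have h2 : ‖φ x‖⁻¹ ≤ c⁻¹ := by
    apply inv_anti₀ hc (hlb x hx)
  have h3 : ‖ρ x‖⁻¹ ≤ (c/2)⁻¹ := by
    apply inv_anti₀ (by positivity) (hρlb x hx)
  calc ‖ρ x - φ x‖ * ‖φ x‖⁻¹ * ‖ρ x‖⁻¹ ≤ δ * c⁻¹ * (c/2)⁻¹ := by
        apply mul_le_mul _ h3 (by positivity) (by positivity)
        apply mul_le_mul h1 h2 (by positivity) hδpos.le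
    _ = 2 * δ / c^2 := by field_simp
    _ ≤ ε := by
        rw [div_le_iff₀ (by positivity : (0:ℝ) < c^2)]
        have h4 : δ ≤ ε * c^2 / 2 := min_le_right _ _
        linarith

lemma pow (hφ : ApproxRat X φ) {M : ℝ} (hM : 0 ≤ M) (hb : ∀ x ∈ X, ‖φ x‖ ≤ M) (m : ℕ) :
    ApproxRat X (fun x => (φ x) ^ m) := by
  induction m with
  | zero => simpa using ofIsRat (IsRat.const 1)
  | succ m ih =>
    have h := ih.mul hφ (M₁ := M ^ m) (M₂ := M) (by positivity) hM
      (fun x hx => by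
        calc ‖φ x ^ m‖ = ‖φ x‖ ^ m := norm_pow _ _
          _ ≤ M ^ m := pow_le_pow_left₀ (norm_nonneg _) (hb x hx) m) hb
    simpa [pow_succ] using h

lemma finsetSum {ι : Type*} (s : Finset ι) (φf : ι → ℂ × ℂ → ℂ)
    (h : ∀ i ∈ s, ApproxRat X (φf i)) : ApproxRat X (fun x => ∑ i ∈ s, φf i x) := by
  classical
  induction s using Finset.induction_on with
  | empty => simpa using ofIsRat (IsRat.const 0)
  | insert a s hnot ih =>
    simp only [Finset.sum_insert hnot]
    exact (h a (Finset.mem_insert_self a s)).add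
      (ih fun i hi => h i (Finset.mem_insert_of_mem hi))

end ApproxRat

end Aux

/-- If `X ⊆ ℂ²` is compact, `f = p/q` is a rational function with `q` nonvanishing on `X`,
`Γ = f(X)` satisfies `R(Γ) = C(Γ)`, and `F` is entire with zero set `V` disjoint from `X`,
then `R(X)` contains every `ψ ∈ C(X)` whose restriction to each fiber `X_t`, `t ∈ Γ`,
lies in `R_V(X_t)`. -/
theorem ratAlg_of_fiberwise_RV
    (X : Set (ℂ × ℂ)) (hX : IsCompact X)
    (p q : MvPolynomial (Fin 2) ℂ) (hpq : IsCoprime p q)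
    (hq : ∀ x ∈ X, evalP q x ≠ 0)
    (f : ℂ × ℂ → ℂ) (hf : ∀ x, f x = evalP p x / evalP q x)
    (Γ : Set ℂ) (hΓ : Γ = f '' X)
    (hRΓ : ∀ g : ℂ → ℂ, ContinuousOn g Γ → MemRatAlg1 Γ g)
    (F : ℂ × ℂ → ℂ) (hF : Differentiable ℂ F)
    (hFX : ∀ x ∈ X, F x ≠ 0)
    (ψ : ℂ × ℂ → ℂ) (hψ : ContinuousOn ψ X)
    (hfib : ∀ t ∈ Γ, MemRVAlg F {x ∈ X | evalP p x = t * evalP q x} ψ) :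
    MemRatAlg X ψ := by
  classical
  rcases X.eq_empty_or_nonempty with hXe | hXne
  · intro ε hε
    exact ⟨0, 1, fun x hx => by simp [hXe] at hx, fun x hx => by simp [hXe] at hx⟩
  have hcontp : Continuous (evalP p) := continuous_evalP p
  have hcontq : Continuous (evalP q) := continuous_evalP q
  have hfc : ContinuousOn f X :=
    ((hcontp.continuousOn.div hcontq.continuousOn hq)).congr (fun x _ => hf x)
  have hΓcomp : IsCompact Γ := hΓ ▸ hX.image_of_continuousOn hfc
  have hfΓ : ∀ x ∈ X, f x ∈ Γ := fun x hx => hΓ ▸ mem_image_of_mem f hx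
  have hFc : Continuous F := hF.continuous
  obtain ⟨x₀, hx₀X, hx₀min⟩ := hX.exists_isMinOn hXne (continuous_norm.comp hFc).continuousOn
  set c : ℝ := ‖F x₀‖ with hcdef
  have hc : 0 < c := norm_pos_iff.mpr (hFX x₀ hx₀X)
  have hlbF : ∀ x ∈ X, c ≤ ‖F x‖ := fun x hx => isMinOn_iff.mp hx₀min x hx
  have hFD : ApproxRat X F := fun ε hε => entire_approx hX hF ε hε
  have hFinv : ApproxRat X (fun x => (F x)⁻¹) := hFD.inv hc hlbF
  have hbinv : ∀ x ∈ X, ‖(F x)⁻¹‖ ≤ c⁻¹ := by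
    intro x hx
    rw [norm_inv]
    exact inv_anti₀ hc (hlbF x hx)
  intro ε hε
  set ε' : ℝ := ε / 8 with hε'def
  have hε'pos : 0 < ε' := by positivity
  have hfib' : ∀ t : ℂ, ∃ (G : ℂ × ℂ → ℂ) (m : ℕ), Differentiable ℂ G ∧ (t ∈ Γ →
      ∀ x ∈ {x ∈ X | evalP p x = t * evalP q x},
        ‖ψ x - G x / F x ^ m‖ < ε') := by
    intro t
    by_cases ht : t ∈ Γ
    · obtain ⟨G, m, hGd, hGa⟩ := hfib t ht ε' hε'pos
      exact ⟨G, m, hGd, fun _ => hGa⟩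
    · exact ⟨0, 0, differentiable_const 0, fun h => absurd h ht⟩
  choose Gf mf hGd hGa using hfib'
  have hnbhd : ∀ t : ℂ, ∃ d : ℝ, 0 < d ∧ (t ∈ Γ → ∀ x ∈ X, dist (f x) t < d →
      ‖ψ x - Gf t x / F x ^ mf t‖ < 2 * ε') := by
    intro t
    by_cases ht : t ∈ Γ
    swap
    · exact ⟨1, one_pos, fun h => absurd h ht⟩
    have hvc : ContinuousOn (fun x => ‖ψ x - Gf t x / F x ^ mf t‖) X := by
      apply ContinuousOn.norm
      exact hψ.sub (((hGd t).continuous.continuousOn).div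
        ((hFc.pow _).continuousOn) (fun x hx => pow_ne_zero _ (hFX x hx)))
    set K := X ∩ (fun x => ‖ψ x - Gf t x / F x ^ mf t‖) ⁻¹' Ici (2 * ε') with hKdef
    have hKX : K ⊆ X := fun x hx => hx.1
    have hKcl : IsClosed K := hvc.preimage_isClosed_of_isClosed hX.isClosed isClosed_Ici
    have hKcomp : IsCompact K := hX.of_isClosed_subset hKcl hKX
    rcases K.eq_empty_or_nonempty with hKe | hKne
    · refine ⟨1, one_pos, fun _ x hx _ => ?_⟩
      by_contra hcon
      push_neg at hcon
      have hxK : x ∈ K := ⟨hx, hcon⟩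
      rw [hKe] at hxK
      exact absurd hxK (notMem_empty x)
    · obtain ⟨x₁, hx₁K, hmin⟩ := hKcomp.exists_isMinOn hKne
        (((hfc.mono hKX).sub (continuousOn_const (c := t))).norm)
      refine ⟨‖f x₁ - t‖, ?_, fun _ x hx hlt => ?_⟩
      · rw [norm_pos_iff, sub_ne_zero]
        intro hft
        have hqx := hq x₁ hx₁K.1
        have hpx : evalP p x₁ = t * evalP q x₁ := by
          have h1 := hf x₁
          rw [hft] at h1
          field_simp [hqx] at h1
          linear_combination -h1
        have hfibx := hGa t ht x₁ ⟨hx₁K.1, hpx⟩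
        have h2 : 2 * ε' ≤ ‖ψ x₁ - Gf t x₁ / F x₁ ^ mf t‖ := hx₁K.2
        linarith
      · by_contra hcon
        push_neg at hcon
        have hxK : x ∈ K := ⟨hx, hcon⟩
        have hge := isMinOn_iff.mp hmin x hxK
        rw [Complex.dist_eq] at hlt
        linarith [show ‖f x₁ - t‖ ≤ ‖f x - t‖ from hge]
  choose df hdfpos hdf using hnbhd
  have hcover : Γ ⊆ ⋃ t ∈ Γ, Metric.ball t (df t / 2) := by
    intro t ht
    apply mem_biUnion ht
    simp only [Metric.mem_ball, dist_self]
    linarith [hdfpos t]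
  obtain ⟨sb, hsΓ, hsfin, hscov⟩ :=
    hΓcomp.elim_finite_subcover_image (fun t _ => Metric.isOpen_ball) hcover
  set sf := hsfin.toFinset with hsfdef
  have hsfΓ : ∀ t ∈ sf, t ∈ Γ := fun t ht => hsΓ (hsfin.mem_toFinset.mp ht)
  set g : ℂ → ℂ → ℝ := fun t y => max (df t / 2 - dist y t) 0 with hgdef
  have hgcont : ∀ t, Continuous (g t) :=
    fun t => (continuous_const.sub (continuous_id.dist continuous_const)).max continuous_const
  have hgnn : ∀ t y, 0 ≤ g t y := fun t y => le_max_right _ _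
  set Sg : ℂ → ℝ := fun y => ∑ t ∈ sf, g t y with hSgdef
  have hSgc : Continuous Sg := continuous_finset_sum _ (fun t _ => hgcont t)
  have hSgpos : ∀ y ∈ Γ, 0 < Sg y := by
    intro y hy
    rcases mem_iUnion₂.mp (hscov hy) with ⟨t, ht, hyt⟩
    have htf : t ∈ sf := hsfin.mem_toFinset.mpr ht
    have h1 : 0 < g t y := by
      have h2 : 0 < df t / 2 - dist y t := by
        have := Metric.mem_ball.mp hyt
        linarith
      exact lt_max_iff.mpr (Or.inl h2)
    exact lt_of_lt_of_le h1 (Finset.single_le_sum (fun i _ => hgnn i y) htf)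
  set H : ℂ → ℂ → ℂ := fun t y => ((g t y / Sg y : ℝ) : ℂ) with hHdef
  have hHcont : ∀ t, ContinuousOn (H t) Γ := fun t =>
    Complex.continuous_ofReal.comp_continuousOn
      (((hgcont t).continuousOn).div hSgc.continuousOn (fun y hy => (hSgpos y hy).ne'))
  have hHnorm : ∀ t y, y ∈ Γ → ‖H t y‖ = g t y / Sg y := by
    intro t y hy
    rw [hHdef]
    simp only [Complex.norm_real]
    exact abs_of_nonneg (div_nonneg (hgnn t y) (hSgpos y hy).le)
  have hnormsum : ∀ y ∈ Γ, ∑ t ∈ sf, ‖H t y‖ = 1 := by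
    intro y hy
    rw [Finset.sum_congr rfl (fun t _ => hHnorm t y hy), ← Finset.sum_div,
      div_eq_one_iff_eq (hSgpos y hy).ne']
  have hHsum : ∀ y ∈ Γ, ∑ t ∈ sf, H t y = 1 := by
    intro y hy
    have h1 : ∑ t ∈ sf, (g t y / Sg y) = 1 := by
      rw [← Finset.sum_div, div_eq_one_iff_eq (hSgpos y hy).ne']
    calc ∑ t ∈ sf, H t y = ((∑ t ∈ sf, (g t y / Sg y) : ℝ) : ℂ) := by
          simp only [hHdef]; push_cast; rfl
      _ = 1 := by rw [h1]; norm_num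
  have hHsupp : ∀ t ∈ sf, ∀ y ∈ Γ, H t y ≠ 0 → dist y t < df t / 2 := by
    intro t ht y hy h0
    by_contra hcon
    push_neg at hcon
    apply h0
    have hg0 : g t y = 0 := max_eq_right (by linarith)
    rw [hHdef]
    simp [hg0]
  set Φf : ℂ → (ℂ × ℂ) → ℂ := fun t x => Gf t x * ((F x)⁻¹) ^ mf t with hΦfdef
  have hΦeq : ∀ t x, Φf t x = Gf t x / F x ^ mf t := by
    intro t x
    rw [hΦfdef]
    simp only [inv_pow, div_eq_mul_inv]
  set φ0 : (ℂ × ℂ) → ℂ := fun x => ∑ t ∈ sf, H t (f x) * Φf t x with hφ0def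
  have hA : ∀ x ∈ X, ‖ψ x - φ0 x‖ ≤ 2 * ε' := by
    intro x hx
    have hfx : f x ∈ Γ := hfΓ x hx
    have h1 : ψ x = ∑ t ∈ sf, H t (f x) * ψ x := by
      rw [← Finset.sum_mul, hHsum _ hfx, one_mul]
    have h2 : ψ x - φ0 x = ∑ t ∈ sf, H t (f x) * (ψ x - Φf t x) := by
      rw [hφ0def]
      simp only []
      conv_lhs => rw [h1]
      rw [← Finset.sum_sub_distrib]
      exact Finset.sum_congr rfl (fun t _ => (mul_sub _ _ _).symm)
    rw [h2]
    refine le_trans (norm_sum_le _ _) ?_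
    have hterm : ∀ t ∈ sf, ‖H t (f x) * (ψ x - Φf t x)‖ ≤ ‖H t (f x)‖ * (2 * ε') := by
      intro t ht
      rw [norm_mul]
      by_cases h0 : H t (f x) = 0
      · rw [h0]
        simp
      · apply mul_le_mul_of_nonneg_left _ (norm_nonneg _)
        have hdist : dist (f x) t < df t / 2 := hHsupp t ht (f x) hfx h0
        have hfib2 := hdf t (hsfΓ t ht) x hx
          (lt_of_lt_of_le hdist (by linarith [hdfpos t]))
        rw [hΦeq]
        exact hfib2.le
    refine le_trans (Finset.sum_le_sum hterm) ?_
    rw [← Finset.sum_mul, hnormsum _ hfx, one_mul]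
  have hφ0mem : ApproxRat X φ0 := by
    apply ApproxRat.finsetSum
    intro t ht
    have hHf : ApproxRat X (fun x => H t (f x)) := by
      intro η hη
      obtain ⟨P1, Q1, hQ1, hclose⟩ := hRΓ (H t) (hHcont t) η hη
      refine ⟨fun x => Polynomial.eval (f x) P1 / Polynomial.eval (f x) Q1,
        isRat_comp_rat1 hq hf P1 Q1 (fun x hx => hQ1 _ (hfΓ x hx)), fun x hx => ?_⟩
      have h3 := hclose (f x) (hfΓ x hx)
      exact h3.le
    have hGt : ApproxRat X (Gf t) := fun η hη => entire_approx hX (hGd t) η hη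
    obtain ⟨MG, hMG⟩ := hX.exists_bound_of_continuousOn (hGd t).continuous.continuousOn
    have hMG' : ∀ x ∈ X, ‖Gf t x‖ ≤ |MG| := fun x hx =>
      le_trans (hMG x hx) (le_abs_self MG)
    have hpow : ApproxRat X (fun x => ((F x)⁻¹) ^ mf t) :=
      hFinv.pow (M := c⁻¹) (by positivity) hbinv (mf t)
    have hpowb : ∀ x ∈ X, ‖((F x)⁻¹) ^ mf t‖ ≤ (c⁻¹) ^ mf t := by
      intro x hx
      rw [norm_pow]
      exact pow_le_pow_left₀ (norm_nonneg _) (hbinv x hx) _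
    have hΦt : ApproxRat X (Φf t) :=
      hGt.mul hpow (M₁ := |MG|) (M₂ := (c⁻¹) ^ mf t) (abs_nonneg MG) (by positivity)
        hMG' hpowb
    have hΦtb : ∀ x ∈ X, ‖Φf t x‖ ≤ |MG| * (c⁻¹) ^ mf t := by
      intro x hx
      rw [hΦfdef]
      simp only [norm_mul]
      exact mul_le_mul (hMG' x hx) (hpowb x hx) (norm_nonneg _) (abs_nonneg MG)
    exact hHf.mul hΦt (M₁ := 1) (M₂ := |MG| * (c⁻¹) ^ mf t) zero_le_one (by positivity)
      (fun x hx => by rw [hHnorm t (f x) (hfΓ x hx)]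
                      rw [div_le_one (hSgpos _ (hfΓ x hx))]
                      exact Finset.single_le_sum (fun i _ => hgnn i (f x)) ht) hΦtb
  obtain ⟨ρ, hρrat, hρclose⟩ := hφ0mem ε' hε'pos
  obtain ⟨P, Q, hQne, hPQ⟩ := hρrat
  refine ⟨P, Q, hQne, fun x hx => ?_⟩
  rw [← hPQ x hx]
  calc ‖ψ x - ρ x‖ ≤ ‖ψ x - φ0 x‖ + ‖φ0 x - ρ x‖ := by
        have h4 : ψ x - ρ x = (ψ x - φ0 x) + (φ0 x - ρ x) := by ring
        rw [h4]
        exact norm_add_le _ _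
    _ ≤ 2 * ε' + ε' := add_le_add (hA x hx) (hρclose x hx)
    _ < ε := by rw [hε'def]; linarith
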